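/- Let S be a multiplicatively closed subset of a ring R consisting of central regular elements, and let S⁻¹R be the localization of R at S. Then R is central linear Armendariz if and only if S⁻¹R is central linear Armendariz. -/
import Mathlib
open Polynomial



/-- A ring `R` is *central linear Armendariz* if whenever the product of two linear
polynomials `(a₀ + a₁x)(b₀ + b₁x) = 0` in `R[x]`, each product `aᵢbⱼ` is central in `R`. -/
def CentralLinearArmendariz (R : Type*) [Ring R] : Prop :=
  ∀ a₀ a₁ b₀ b₁ : R,
    (C a₀ + C a₁ * X) * (C b₀ + C b₁ * X) = 0 →
      a₀ * b₀ ∈ Set.center R ∧ a₀ * b₁ ∈ Set.center R ∧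
      a₁ * b₀ ∈ Set.center R ∧ a₁ * b₁ ∈ Set.center R

/-- A ring `R` is *linear Armendariz* if whenever the product of two linear
polynomials `(a₀ + a₁x)(b₀ + b₁x) = 0` in `R[x]`, each product `aᵢbⱼ` is zero. -/
def LinearArmendariz (R : Type*) [Ring R] : Prop :=
  ∀ a₀ a₁ b₀ b₁ : R,
    (C a₀ + C a₁ * X) * (C b₀ + C b₁ * X) = 0 →
      a₀ * b₀ = 0 ∧ a₀ * b₁ = 0 ∧ a₁ * b₀ = 0 ∧ a₁ * b₁ = 0

/-- A ring `R` is *Armendariz* if whenever `f g : R[x]` satisfy `f * g = 0`,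
every product of a coefficient of `f` with a coefficient of `g` is zero. -/
def Armendariz (R : Type*) [Ring R] : Prop :=
  ∀ f g : R[X], f * g = 0 → ∀ i j : ℕ, f.coeff i * g.coeff j = 0

/-- A multiplicatively closed set of central elements is a (right) Ore set. -/
def centralOreSet {R : Type*} [Ring R] (S : Submonoid R)
    (hcent : ∀ s ∈ S, s ∈ Set.center R) : OreLocalization.OreSet S where
  ore_right_cancel r₁ r₂ s h := ⟨s, by
    have hs := Semigroup.mem_center_iff.mp (hcent s s.2)
    rw [← hs r₁, ← hs r₂]; exact h⟩
  oreNum r _ := r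
  oreDenom _ s := s
  ore_eq r s := Semigroup.mem_center_iff.mp (hcent s s.2) r |>.symm ▸ rfl



open Polynomial

lemma lin_expand {R : Type*} [Ring R] (a₀ a₁ b₀ b₁ : R) :
    (C a₀ + C a₁ * X) * (C b₀ + C b₁ * X) =
      C (a₀*b₀) + C (a₀*b₁ + a₁*b₀) * X + C (a₁*b₁) * X^2 := by
  have h : (X : R[X]) * C b₀ = C b₀ * X := X_mul_C b₀
  have h1 : (X : R[X]) * C b₁ = C b₁ * X := X_mul_C b₁
  simp only [add_mul, mul_add, map_add, map_mul]
  rw [mul_assoc (C a₁) X (C b₀), h, mul_assoc (C a₁) X (C b₁ * X), ← mul_assoc X (C b₁) X, h1]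
  rw [sq]
  noncomm_ring

lemma lin_zero_iff {R : Type*} [Ring R] (a₀ a₁ b₀ b₁ : R) :
    (C a₀ + C a₁ * X) * (C b₀ + C b₁ * X) = 0 ↔
      a₀*b₀ = 0 ∧ a₀*b₁ + a₁*b₀ = 0 ∧ a₁*b₁ = 0 := by
  rw [lin_expand]
  constructor
  · intro h
    refine ⟨?_, ?_, ?_⟩
    · simpa using congrArg (fun p => coeff p 0) h
    · simpa [mul_assoc, coeff_C_mul, coeff_X_pow] using congrArg (fun p => coeff p 1) h
    · simpa [mul_assoc, coeff_C_mul, coeff_X_pow] using congrArg (fun p => coeff p 2) h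
  · rintro ⟨h1, h2, h3⟩; simp [h1, h2, h3]
open Polynomial OreLocalization

section
variable {R : Type*} [Ring R] {S : Submonoid R} [OreLocalization.OreSet S]

lemma oreDiv_mul_oreDiv_central (hcent : ∀ s ∈ S, s ∈ Set.center R)
    (a b : R) (s t : S) : (a /ₒ s) * (b /ₒ t) = (a * b) /ₒ (t * s) := by
  rw [oreDiv_mul_char a b s t a t
    ((Semigroup.mem_center_iff.mp (hcent t t.2) a).symm)]

lemma oreDiv_eq_zero_iff_central (hcent : ∀ s ∈ S, s ∈ Set.center R)
    (hreg : ∀ s ∈ S, ∀ r : R, (r * s = 0 → r = 0) ∧ (s * r = 0 → r = 0))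
    (r : R) (s : S) : r /ₒ s = 0 ↔ r = 0 := by
  constructor
  · intro h
    rw [OreLocalization.zero_def, oreDiv_eq_iff] at h
    obtain ⟨u, v, h1, h2⟩ := h
    simp only [smul_eq_mul, mul_zero, mul_one, smul_zero, Submonoid.coe_one] at h1 h2
    have hur : (u : R) * r = 0 := by
      rw [show (u:R) = v * s from h2, mul_assoc, ← Semigroup.mem_center_iff.mp (hcent s s.2) r,
        ← mul_assoc, ← h1, zero_mul]
    exact (hreg u u.2 r).2 hur
  · rintro rfl; exact zero_oreDiv s

lemma oreDiv_mem_center (hcent : ∀ s ∈ S, s ∈ Set.center R)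
    {c : R} (hc : c ∈ Set.center R) (s : S) :
    c /ₒ s ∈ Set.center (OreLocalization S R) := by
  rw [Semigroup.mem_center_iff]
  intro z
  induction z using OreLocalization.ind with
  | _ r t =>
    rw [oreDiv_mul_oreDiv_central hcent, oreDiv_mul_oreDiv_central hcent,
      Semigroup.mem_center_iff.mp hc r]
    congr 1
    ext
    exact Semigroup.mem_center_iff.mp (hcent t t.2) s

lemma common_denom (A B : OreLocalization S R) (hcent : ∀ s ∈ S, s ∈ Set.center R) :
    ∃ (a b : R) (s : S), A = a /ₒ s ∧ B = b /ₒ s := by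
  induction A using OreLocalization.ind with
  | _ a s =>
    induction B using OreLocalization.ind with
    | _ b t =>
      refine ⟨t * a, s * b, t * s, ?_, ?_⟩
      · rw [OreLocalization.expand' a s t]; rfl
      · rw [OreLocalization.expand' b t s]
        congr 1
        ext
        exact (Semigroup.mem_center_iff.mp (hcent s s.2) t : (t:R) * s = s * t).symm

end


/-- Let `S` be a multiplicatively closed subset of `R` consisting of central regular
elements.  Then `R` is central linear Armendariz iff the localization `S⁻¹R` is
central linear Armendariz. -/
theorem stmt_14 (R : Type*) [Ring R] (S : Submonoid R)
    (hcent : ∀ s ∈ S, s ∈ Set.center R)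
    (hreg : ∀ s ∈ S, ∀ r : R, (r * s = 0 → r = 0) ∧ (s * r = 0 → r = 0)) :
    letI := centralOreSet S hcent
    (CentralLinearArmendariz R ↔ CentralLinearArmendariz (OreLocalization S R)) := by
  letI := centralOreSet S hcent
  have hinj : Function.Injective (OreLocalization.numeratorHom : R → OreLocalization S R) :=
    OreLocalization.numeratorHom_inj (fun s hs y hy => (hreg s hs y).2 hy)
  constructor
  · -- R CLA → localization CLA
    intro hR A₀ A₁ B₀ B₁ hAB
    obtain ⟨a₀, a₁, s, rfl, rfl⟩ := common_denom A₀ A₁ hcent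
    obtain ⟨b₀, b₁, t, rfl, rfl⟩ := common_denom B₀ B₁ hcent
    rw [lin_zero_iff] at hAB
    obtain ⟨h00, h1, h11⟩ := hAB
    rw [oreDiv_mul_oreDiv_central hcent,
      oreDiv_eq_zero_iff_central hcent hreg] at h00 h11
    rw [oreDiv_mul_oreDiv_central hcent, oreDiv_mul_oreDiv_central hcent,
      OreLocalization.add_oreDiv, oreDiv_eq_zero_iff_central hcent hreg] at h1
    have hpoly : (C a₀ + C a₁ * X) * (C b₀ + C b₁ * X) = 0 :=
      (lin_zero_iff a₀ a₁ b₀ b₁).mpr ⟨h00, h1, h11⟩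
    obtain ⟨c00, c01, c10, c11⟩ := hR a₀ a₁ b₀ b₁ hpoly
    exact ⟨by rw [oreDiv_mul_oreDiv_central hcent]; exact oreDiv_mem_center hcent c00 _,
      by rw [oreDiv_mul_oreDiv_central hcent]; exact oreDiv_mem_center hcent c01 _,
      by rw [oreDiv_mul_oreDiv_central hcent]; exact oreDiv_mem_center hcent c10 _,
      by rw [oreDiv_mul_oreDiv_central hcent]; exact oreDiv_mem_center hcent c11 _⟩
  · -- localization CLA → R CLA
    intro hQ a₀ a₁ b₀ b₁ hab
    set φ : R →+* OreLocalization S R := OreLocalization.numeratorRingHom with hφ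
    have hφa : ∀ r : R, φ r = OreLocalization.numeratorHom r := fun r => rfl
    have hmap : (C (φ a₀) + C (φ a₁) * X) * (C (φ b₀) + C (φ b₁) * X) = 0 := by
      have := congrArg (Polynomial.map φ) hab
      simpa using this
    obtain ⟨c00, c01, c10, c11⟩ := hQ _ _ _ _ hmap
    have key : ∀ x y : R, φ x * φ y ∈ Set.center (OreLocalization S R) →
        x * y ∈ Set.center R := by
      intro x y hxy
      rw [Semigroup.mem_center_iff]
      intro g
      apply hinj
      have h2 := Semigroup.mem_center_iff.mp hxy (φ g)
      show φ (g * (x * y)) = φ (x * y * g)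
      simp only [map_mul]
      simpa using h2
    exact ⟨key _ _ c00, key _ _ c01, key _ _ c10, key _ _ c11⟩
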